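/- arXiv:2107.03574 — 9 statements merged into one kernel-verified Lean document; each statement's English description precedes it below -/
import Mathlib

section
/- Let p be an odd prime. Then (∑_{i=1}^{p-1} (i/p)·4^i)^2 ≡ -(-1/p)·(4^p-1)/3 + (-1/p)·p (mod 4^p - 1), where (i/p) denotes the Legendre symbol. -/
private lemma modeq_sum {α : Type*} {s : Finset α} {f g : α → ℤ} {n : ℤ}
    (h : ∀ i ∈ s, f i ≡ g i [ZMOD n]) :
    ∑ i ∈ s, f i ≡ ∑ i ∈ s, g i [ZMOD n] := by
  classical
  induction s using Finset.induction_on with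
  | empty => simp
  | insert _ _ hx ih =>
    rw [Finset.sum_insert hx, Finset.sum_insert hx]
    exact (h _ (Finset.mem_insert_self _ _)).add
      (ih fun i hi => h i (Finset.mem_insert_of_mem hi))

private lemma pow_cong (p : ℕ) {a b : ℕ} (h : a % p = b % p) :
    (4:ℤ) ^ a ≡ 4 ^ b [ZMOD 4 ^ p - 1] := by
  have h4 : (4:ℤ) ^ p ≡ 1 [ZMOD 4 ^ p - 1] := by
    rw [Int.modEq_iff_dvd]
    exact ⟨-1, by ring⟩
  have key : ∀ c : ℕ, (4:ℤ) ^ c ≡ 4 ^ (c % p) [ZMOD 4 ^ p - 1] := by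
    intro c
    conv_lhs => rw [← Nat.div_add_mod c p, pow_add, pow_mul]
    calc ((4:ℤ) ^ p) ^ (c / p) * 4 ^ (c % p)
        ≡ 1 ^ (c / p) * 4 ^ (c % p) [ZMOD 4 ^ p - 1] := ((h4.pow _).mul_right _)
      _ = 4 ^ (c % p) := by rw [one_pow, one_mul]
  calc (4:ℤ) ^ a ≡ 4 ^ (a % p) [ZMOD 4 ^ p - 1] := key a
    _ = 4 ^ (b % p) := by rw [h]
    _ ≡ 4 ^ b [ZMOD 4 ^ p - 1] := (key b).symm

theorem stmt0 (p : ℕ) [Fact p.Prime] (hp2 : p ≠ 2) :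
    (∑ i ∈ Finset.Icc 1 (p - 1), legendreSym p (i : ℤ) * 4 ^ i) ^ 2 ≡
      -(legendreSym p (-1)) * (((4:ℤ) ^ p - 1) / 3) + legendreSym p (-1) * (p : ℤ)
      [ZMOD (4:ℤ) ^ p - 1] := by
  classical
  have hp : p.Prime := Fact.out
  have hp0 : 0 < p := hp.pos
  haveI : NeZero p := ⟨hp0.ne'⟩
  have hchar : ringChar (ZMod p) ≠ 2 := by
    rw [ZMod.ringChar_zmod_n]; exact hp2
  set N : ℤ := 4 ^ p - 1 with hN
  set χ : ZMod p → ℤ := fun x => quadraticChar (ZMod p) x with hχ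
  set F : ZMod p → ℤ := fun x => 4 ^ x.val with hF
  set T : ℤ := ∑ x : ZMod p, F x with hT
  -- transfer sums over ZMod p to sums over range p
  have hzsum : ∀ f : ℕ → ℤ, ∑ x : ZMod p, f x.val = ∑ i ∈ Finset.range p, f i := by
    intro f
    refine Finset.sum_bij' (fun x _ => x.val) (fun i _ => (i : ZMod p)) ?_ ?_ ?_ ?_ ?_
    · intro a _; exact Finset.mem_range.2 (ZMod.val_lt a)
    · intro b _; exact Finset.mem_univ _
    · intro a _; exact ZMod.natCast_rightInverse a
    · intro b hb; exact ZMod.val_natCast_of_lt (Finset.mem_range.1 hb)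
    · intro a _; rfl
  -- T equals (4^p-1)/3
  have hTval : T = ∑ i ∈ Finset.range p, (4:ℤ) ^ i := hzsum fun i => 4 ^ i
  have h3T : N = 3 * T := by
    rw [hTval, hN, ← mul_geom_sum (4:ℤ) p]; norm_num
  have hdiv : N / 3 = T := by rw [h3T]; exact Int.mul_ediv_cancel_left _ (by norm_num)
  -- χ is multiplicative, quadratic, sums to zero
  have hχ0 : χ 0 = 0 := by simp [hχ]
  have hχmul : ∀ x y : ZMod p, χ (x * y) = χ x * χ y := fun x y =>
    map_mul (quadraticChar (ZMod p)) x y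
  have hχsq : ∀ x : ZMod p, x ≠ 0 → χ x * χ x = 1 := fun x hx => by
    have := quadraticChar_sq_one hx
    rwa [sq] at this
  have hχsum : ∑ x : ZMod p, χ x = 0 := quadraticChar_sum_zero hchar
  have hχneg1 : legendreSym p (-1) = χ (-1) := by
    simp [legendreSym, hχ]
  -- the LHS sum equals the sum over ZMod p
  have hS : ∑ i ∈ Finset.Icc 1 (p - 1), legendreSym p (i : ℤ) * 4 ^ i
      = ∑ x : ZMod p, χ x * F x := by
    have h1 : ∑ x : ZMod p, χ x * F x
        = ∑ i ∈ Finset.range p, legendreSym p (i : ℤ) * 4 ^ i := by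
      rw [← hzsum fun i => legendreSym p (i : ℤ) * 4 ^ i]
      refine Finset.sum_congr rfl fun x _ => ?_
      have : legendreSym p (x.val : ℤ) = χ x := by
        simp [legendreSym, hχ, ZMod.natCast_val, ZMod.cast_id]
      rw [this]
    have h2 : Finset.Icc 1 (p - 1) = (Finset.range p).erase 0 := by
      ext i
      simp only [Finset.mem_Icc, Finset.mem_erase, Finset.mem_range]
      omega
    rw [h1, h2, ← Finset.add_sum_erase _ _ (Finset.mem_range.2 hp0)]
    simp [legendreSym.at_zero]
  rw [hS, hχneg1, hdiv]
  -- key congruence for F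
  have hFadd : ∀ x y : ZMod p, F x * F y ≡ F (x + y) [ZMOD N] := by
    intro x y
    have h : (x.val + y.val) % p = (x + y).val % p := by
      rw [ZMod.val_add, Nat.mod_mod_of_dvd _ dvd_rfl]
    simp only [hF, ← pow_add]
    exact pow_cong p h
  -- main chain
  have step1 : (∑ x : ZMod p, χ x * F x) ^ 2
      = ∑ x : ZMod p, ∑ y : ZMod p, (χ x * χ y) * (F x * F y) := by
    rw [sq, Finset.sum_mul_sum]
    exact Finset.sum_congr rfl fun x _ => Finset.sum_congr rfl fun y _ => by ring
  have step2 : ∑ x : ZMod p, ∑ y : ZMod p, (χ x * χ y) * (F x * F y)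
      ≡ ∑ x : ZMod p, ∑ y : ZMod p, (χ x * χ y) * F (x + y) [ZMOD N] :=
    modeq_sum fun x _ => modeq_sum fun y _ => (hFadd x y).mul_left _
  have step3a : ∀ x : ZMod p,
      ∑ y : ZMod p, (χ x * χ y) * F (x + y) = ∑ k : ZMod p, χ k * F (x * (1 + k)) := by
    intro x
    by_cases hx : x = 0
    · subst hx
      have hF0 : F 0 = 1 := by simp [hF, ZMod.val_zero]
      simp only [hχ0, zero_mul, Finset.sum_const_zero, hF0, mul_one, hχsum]
    · rw [← Equiv.sum_comp (Equiv.mulLeft₀ x hx) (fun y => (χ x * χ y) * F (x + y))]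
      refine Finset.sum_congr rfl fun k _ => ?_
      have he : (Equiv.mulLeft₀ x hx) k = x * k := rfl
      rw [he, hχmul, ← mul_assoc, hχsq x hx, one_mul, show x + x * k = x * (1 + k) by ring]
  have step3 : ∑ x : ZMod p, ∑ y : ZMod p, (χ x * χ y) * F (x + y)
      = ∑ k : ZMod p, χ k * ∑ x : ZMod p, F (x * (1 + k)) := by
    calc ∑ x : ZMod p, ∑ y : ZMod p, (χ x * χ y) * F (x + y)
        = ∑ x : ZMod p, ∑ k : ZMod p, χ k * F (x * (1 + k)) :=
          Finset.sum_congr rfl fun x _ => step3a x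
      _ = ∑ k : ZMod p, ∑ x : ZMod p, χ k * F (x * (1 + k)) := Finset.sum_comm
      _ = ∑ k : ZMod p, χ k * ∑ x : ZMod p, F (x * (1 + k)) := by
          simp [Finset.mul_sum]
  have step4 : ∀ k : ZMod p,
      ∑ x : ZMod p, F (x * (1 + k)) = if 1 + k = 0 then (p : ℤ) else T := by
    intro k
    by_cases h : 1 + k = 0
    · rw [if_pos h]
      have : ∀ x : ZMod p, F (x * (1 + k)) = 1 := by
        intro x; rw [h, mul_zero]; simp [hF, ZMod.val_zero]
      simp [this, ZMod.card]
    · rw [if_neg h, hT]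
      exact Equiv.sum_comp (Equiv.mulRight₀ (1 + k) h) F
  have step5 : ∑ k : ZMod p, χ k * (if 1 + k = 0 then (p : ℤ) else T)
      = χ (-1) * ((p : ℤ) - T) := by
    have hite : ∀ k : ZMod p, (if 1 + k = 0 then (p : ℤ) else T)
        = T + (if k = -1 then ((p : ℤ) - T) else 0) := by
      intro k
      by_cases hk : k = -1
      · subst hk; simp
      · have h' : 1 + k ≠ 0 := fun hh => hk (by
          have := neg_eq_of_add_eq_zero_right hh
          rw [← this])
        simp [hk, h']
    simp only [hite, mul_add, Finset.sum_add_distrib, ← Finset.sum_mul, hχsum, zero_mul,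
      mul_ite, mul_zero]
    rw [Finset.sum_ite_eq' Finset.univ (-1 : ZMod p) (fun k => χ k * ((p:ℤ) - T))]
    simp
  calc (∑ x : ZMod p, χ x * F x) ^ 2
      = ∑ x : ZMod p, ∑ y : ZMod p, (χ x * χ y) * (F x * F y) := step1
    _ ≡ ∑ x : ZMod p, ∑ y : ZMod p, (χ x * χ y) * F (x + y) [ZMOD N] := step2
    _ = ∑ k : ZMod p, χ k * ∑ x : ZMod p, F (x * (1 + k)) := step3
    _ = ∑ k : ZMod p, χ k * (if 1 + k = 0 then (p : ℤ) else T) := by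
        exact Finset.sum_congr rfl fun k _ => by rw [step4 k]
    _ = χ (-1) * ((p : ℤ) - T) := step5
    _ = -χ (-1) * T + χ (-1) * (p : ℤ) := by ring
end

section
/- For an odd prime p, ∑_{t=1}^{p-1} (2t/p)·4^{2t} + ∑_{t=0, t≠(p-1)/2}^{p-1} ((2t+1)/p)·4^{2t+1} ≡ 0 (mod 4^p + 1). -/
theorem stmt3 (p : ℕ) [Fact p.Prime] (hp2 : p ≠ 2) :
    (∑ t ∈ Finset.Icc 1 (p - 1), legendreSym p (2 * t : ℤ) * 4 ^ (2 * t)) +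
      (∑ t ∈ (Finset.range p).erase ((p - 1) / 2),
        legendreSym p (2 * t + 1 : ℤ) * 4 ^ (2 * t + 1)) ≡ 0
      [ZMOD (4:ℤ) ^ p + 1] := by
  have hp : p.Prime := Fact.out
  have hodd : p % 2 = 1 := Nat.odd_iff.mp (hp.odd_of_ne_two hp2)
  have hp1 : 1 ≤ p := hp.one_lt.le
  set f : ℕ → ℤ := fun m => legendreSym p (m : ℤ) * 4 ^ m with hf
  -- Step 1: the given LHS equals ∑ over (Icc 1 (2p-1)).erase p of f
  have key1 :
      (∑ t ∈ Finset.Icc 1 (p - 1), legendreSym p (2 * t : ℤ) * 4 ^ (2 * t)) +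
        (∑ t ∈ (Finset.range p).erase ((p - 1) / 2),
          legendreSym p (2 * t + 1 : ℤ) * 4 ^ (2 * t + 1)) =
      ∑ m ∈ (Finset.Icc 1 (2 * p - 1)).erase p, f m := by
    rw [← Finset.sum_filter_add_sum_filter_not ((Finset.Icc 1 (2 * p - 1)).erase p)
      (fun m => m % 2 = 0) f]
    congr 1
    · refine Finset.sum_nbij' (fun t => 2 * t) (fun m => m / 2) ?_ ?_ ?_ ?_ ?_
      · intro a ha
        simp only [Finset.mem_filter, Finset.mem_erase, Finset.mem_Icc] at *
        omega
      · intro a ha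
        simp only [Finset.mem_filter, Finset.mem_erase, Finset.mem_Icc] at *
        omega
      · intro a _; omega
      · intro a ha
        simp only [Finset.mem_filter, Finset.mem_erase, Finset.mem_Icc] at ha
        omega
      · intro a _
        simp only [hf]
        norm_cast
    · refine Finset.sum_nbij' (fun t => 2 * t + 1) (fun m => m / 2) ?_ ?_ ?_ ?_ ?_
      · intro a ha
        simp only [Finset.mem_filter, Finset.mem_erase, Finset.mem_range, Finset.mem_Icc] at *
        omega
      · intro a ha
        simp only [Finset.mem_filter, Finset.mem_erase, Finset.mem_range, Finset.mem_Icc] at *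
        omega
      · intro a _; omega
      · intro a ha
        simp only [Finset.mem_filter, Finset.mem_erase, Finset.mem_range, Finset.mem_Icc] at ha
        omega
      · intro a _
        simp only [hf]
        norm_cast
    -- Step 2: factor
  have key2 :
      ∑ m ∈ (Finset.Icc 1 (2 * p - 1)).erase p, f m =
        ((4:ℤ) ^ p + 1) * ∑ k ∈ Finset.Icc 1 (p - 1), legendreSym p (k : ℤ) * 4 ^ k := by
    have hsplit : (Finset.Icc 1 (2 * p - 1)).erase p =
        Finset.Icc 1 (p - 1) ∪ Finset.Icc (p + 1) (2 * p - 1) := by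
      ext m
      simp only [Finset.mem_erase, Finset.mem_Icc, Finset.mem_union]
      omega
    have hdisj : Disjoint (Finset.Icc 1 (p - 1)) (Finset.Icc (p + 1) (2 * p - 1)) := by
      rw [Finset.disjoint_left]
      intro m hm hm'
      simp only [Finset.mem_Icc] at *
      omega
    rw [hsplit, Finset.sum_union hdisj]
    have hre : ∑ m ∈ Finset.Icc (p + 1) (2 * p - 1), f m =
        ∑ k ∈ Finset.Icc 1 (p - 1), legendreSym p (k : ℤ) * 4 ^ (k + p) := by
      refine Finset.sum_nbij' (fun m => m - p) (fun k => k + p) ?_ ?_ ?_ ?_ ?_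
      · intro a ha; simp only [Finset.mem_Icc] at *; omega
      · intro a ha; simp only [Finset.mem_Icc] at *; omega
      · intro a ha; simp only [Finset.mem_Icc] at ha; omega
      · intro a _; omega
      · intro a ha
        simp only [Finset.mem_Icc] at ha
        simp only [hf]
        congr 1
        · rw [legendreSym.mod p (a : ℤ), legendreSym.mod p ((a - p : ℕ) : ℤ),
            show ((a - p : ℕ) : ℤ) = (a : ℤ) - p by omega]
          rw [Int.sub_emod, Int.emod_self, sub_zero, Int.emod_emod_of_dvd _ dvd_rfl]
        · congr 1
          omega
    rw [hre, ← Finset.sum_add_distrib, Finset.mul_sum]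
    refine Finset.sum_congr rfl ?_
    intro k _
    simp only [hf]
    ring
  rw [key1, key2]
  exact (Int.modEq_zero_iff_dvd).mpr ⟨_, rfl⟩
end

section
/- Let p be an odd prime and let d > 1 be a divisor of 4^p - 1 with gcd(d, 3) = 1 and such that d divides (∑_{t=1}^{p-1} (t/p)·4^t)^2. Then d = p, and moreover this is impossible; i.e., no such d exists. -/
open Finset

lemma sum_range_eq_sum_zmod {M : Type*} [AddCommMonoid M] (n : ℕ) [NeZero n] (f : ZMod n → M) :
    ∑ t ∈ Finset.range n, f (t : ZMod n) = ∑ x : ZMod n, f x := by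
  refine Finset.sum_nbij' (fun t => (t : ZMod n)) (fun x => x.val) (fun _ _ => Finset.mem_univ _)
    (fun x _ => Finset.mem_range.mpr (ZMod.val_lt x)) ?_ ?_ (fun _ _ => rfl)
  · intro t ht; exact ZMod.val_cast_of_lt (Finset.mem_range.mp ht)
  · intro x _; exact ZMod.natCast_rightInverse x

theorem stmt5 (p : ℕ) [Fact p.Prime] (hp2 : p ≠ 2) (d : ℕ) (hd1 : 1 < d)
    (hdvd : (d : ℤ) ∣ (4:ℤ) ^ p - 1) (hgcd : Nat.gcd d 3 = 1)
    (hdiv : (d : ℤ) ∣ (∑ t ∈ Finset.Icc 1 (p - 1), legendreSym p (t : ℤ) * 4 ^ t) ^ 2) :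
    d = p ∧ False := by
  haveI : NeZero d := ⟨by omega⟩
  have hp : p.Prime := Fact.out
  haveI : NeZero p := ⟨hp.pos.ne'⟩
  set R := ZMod d with hR
  -- 4 is a p-th root of unity in R
  have hcast : (((4:ℤ) ^ p - 1 : ℤ) : R) = 0 := (ZMod.intCast_zmod_eq_zero_iff_dvd _ _).mpr hdvd
  have hζ : (4 : R) ^ p = 1 := by
    push_cast at hcast; linear_combination hcast
  set ψ : AddChar (ZMod p) R := AddChar.zmodChar p hζ with hψdef
  set χ : MulChar (ZMod p) R :=
    (quadraticChar (ZMod p)).ringHomComp (Int.castRingHom R) with hχdef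
  have hχ_apply : ∀ x : ZMod p, χ x = ((quadraticChar (ZMod p) x : ℤ) : R) := fun x => rfl
  -- 3 is a unit in R
  have h3 : IsUnit (3 : R) := by
    have := (ZMod.isUnit_iff_coprime 3 d).mpr (Nat.coprime_comm.mp hgcd)
    simpa using this
  -- the sum of all p-th roots of unity vanishes
  have hgeom : ∑ t ∈ Finset.range p, (4 : R) ^ t = 0 := by
    have h := geom_sum_mul (4 : ℤ) p
    have h2 : (3 : R) * ∑ t ∈ Finset.range p, (4 : R) ^ t = 0 := by
      have hcR := congrArg (fun z : ℤ => (z : R)) h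
      push_cast at hcR
      calc (3 : R) * ∑ t ∈ Finset.range p, (4 : R) ^ t
          = (∑ t ∈ Finset.range p, (4 : R) ^ t) * 3 := by ring
        _ = (4 : R) ^ p - 1 := by
          rw [Int.cast_mul, Int.cast_sum] at hcR; simpa using hcR
        _ = 0 := by rw [hζ]; ring
    exact h3.mul_right_eq_zero.mp h2
  have hsum0 : ∑ x : ZMod p, ψ x = 0 := by
    rw [← sum_range_eq_sum_zmod p ψ]
    rw [← hgeom]
    refine Finset.sum_congr rfl fun t _ => ?_
    exact AddChar.zmodChar_apply' hζ t
  have hsa : ∀ a : ZMod p, ∑ x : ZMod p, ψ (a * x) = if a = 0 then (p : R) else 0 := by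
    intro a
    split_ifs with h
    · simp [h, ZMod.card]
    · rw [← hsum0]
      exact Fintype.sum_bijective _ (mulLeft_bijective₀ a h) _ _ fun x => rfl
  have hχ0 : χ 0 = 0 := by
    rw [hχ_apply, quadraticChar_zero]; norm_num
  have hχsum : ∑ x : ZMod p, χ x = 0 := by
    have h2 : ringChar (ZMod p) ≠ 2 := by rw [ZMod.ringChar_zmod_n]; exact hp2
    have hq := quadraticChar_sum_zero h2
    calc ∑ x : ZMod p, χ x = ((∑ x : ZMod p, quadraticChar (ZMod p) x : ℤ) : R) := by
          rw [Int.cast_sum]; rfl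
      _ = 0 := by rw [hq]; norm_num
  have hquad : ∀ x : ZMod p, x ≠ 0 → χ x * χ x = 1 := by
    intro x hx
    rcases quadraticChar_dichotomy hx with h | h <;> rw [hχ_apply, h] <;> norm_num
  set G : R := ∑ x : ZMod p, χ x * ψ x with hGdef
  -- the Gauss sum squared
  have hGsq : G ^ 2 = χ (-1) * (p : R) := by
    have step1 : ∀ x : ZMod p,
        (∑ y : ZMod p, (χ x * ψ x) * (χ y * ψ y))
          = ∑ u : ZMod p, (χ x * χ x) * χ u * ψ (x * (1 + u)) := by
      intro x
      rcases eq_or_ne x 0 with rfl | hx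
      · simp [hχ0]
      · refine (Fintype.sum_bijective _ (mulLeft_bijective₀ x hx) _ _ fun u => ?_).symm
        have hψm : ψ (x * (1 + u)) = ψ x * ψ (x * u) := by
          rw [mul_add, mul_one, AddChar.map_add_eq_mul]
        have hχm : χ (x * u) = χ x * χ u := map_mul χ x u
        rw [hψm, hχm]
        ring
    have step2 : ∀ a : ZMod p,
        ∑ x : ZMod p, (χ x * χ x) * ψ (x * a) = (∑ x : ZMod p, ψ (a * x)) - 1 := by
      intro a
      simp_rw [mul_comm a]
      rw [← Finset.sum_erase_add Finset.univ _ (Finset.mem_univ (0 : ZMod p)),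
        ← Finset.sum_erase_add Finset.univ (fun x : ZMod p => ψ (x * a))
          (Finset.mem_univ (0 : ZMod p))]
      have h0 : ((0 : ZMod p) * a) = 0 := by ring
      rw [Finset.sum_congr rfl fun x hx => by
        rw [hquad x (Finset.mem_erase.mp hx).1, one_mul]]
      rw [hχ0, h0, AddChar.map_zero_eq_one]
      ring
    have hone : ∀ u : ZMod p, (1 + u = 0) ↔ (u = -1) := by
      intro u; constructor
      · intro h; linear_combination h
      · intro h; rw [h]; ring
    calc G ^ 2 = ∑ x : ZMod p, ∑ y : ZMod p, (χ x * ψ x) * (χ y * ψ y) := by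
          rw [sq, hGdef, Finset.sum_mul_sum]
      _ = ∑ x : ZMod p, ∑ u : ZMod p, (χ x * χ x) * χ u * ψ (x * (1 + u)) :=
          Finset.sum_congr rfl fun x _ => step1 x
      _ = ∑ u : ZMod p, χ u * (∑ x : ZMod p, (χ x * χ x) * ψ (x * (1 + u))) := by
          rw [Finset.sum_comm]
          refine Finset.sum_congr rfl fun u _ => ?_
          rw [Finset.mul_sum]
          exact Finset.sum_congr rfl fun x _ => by ring
      _ = ∑ u : ZMod p, χ u * ((if 1 + u = 0 then (p : R) else 0) - 1) := by
          refine Finset.sum_congr rfl fun u _ => ?_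
          rw [step2, hsa]
      _ = (∑ u : ZMod p, χ u * (if u = -1 then (p : R) else 0)) - ∑ u : ZMod p, χ u := by
          rw [← Finset.sum_sub_distrib]
          refine Finset.sum_congr rfl fun u _ => ?_
          rw [mul_sub, mul_one]
          congr 2
          simp [hone u]
      _ = χ (-1) * (p : R) := by
          rw [hχsum, sub_zero]
          simp [mul_ite, mul_zero]
  -- the integer sum casts to G
  have hG : ((∑ t ∈ Finset.Icc 1 (p - 1), legendreSym p (t : ℤ) * 4 ^ t : ℤ) : R) = G := by
    have hp1 : 1 ≤ p := hp.pos
    have hrange : Finset.range p = insert 0 (Finset.Icc 1 (p - 1)) := by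
      ext t
      simp only [Finset.mem_range, Finset.mem_insert, Finset.mem_Icc]
      omega
    have h0 : (0 : ℕ) ∉ Finset.Icc 1 (p - 1) := by simp
    calc ((∑ t ∈ Finset.Icc 1 (p - 1), legendreSym p (t : ℤ) * 4 ^ t : ℤ) : R)
        = ∑ t ∈ Finset.Icc 1 (p - 1), ((legendreSym p (t : ℤ) : ℤ) : R) * (4 : R) ^ t := by
          rw [Int.cast_sum]; push_cast; rfl
      _ = ∑ t ∈ Finset.range p, ((legendreSym p (t : ℤ) : ℤ) : R) * (4 : R) ^ t := by
          rw [hrange, Finset.sum_insert h0]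
          norm_num [legendreSym.at_zero]
      _ = ∑ t ∈ Finset.range p, χ ((t : ℕ) : ZMod p) * ψ ((t : ℕ) : ZMod p) := by
          refine Finset.sum_congr rfl fun t _ => ?_
          rw [hχ_apply]
          congr 1
          · rw [legendreSym]; push_cast; rfl
          · exact (AddChar.zmodChar_apply' hζ t).symm
      _ = G := sum_range_eq_sum_zmod p fun x => χ x * ψ x
  -- G^2 = 0 in R
  have hG0 : G ^ 2 = 0 := by
    rw [← hG, ← Int.cast_pow]
    exact (ZMod.intCast_zmod_eq_zero_iff_dvd _ _).mpr hdiv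
  -- hence p = 0 in R
  have hp0 : (p : R) = 0 := by
    have hne : (-1 : ZMod p) ≠ 0 := by
      simp only [ne_eq, neg_eq_zero]
      exact one_ne_zero
    have h1 := hquad (-1) hne
    have : χ (-1) * (χ (-1) * (p : R)) = 0 := by rw [← hGsq, hG0, mul_zero]
    rwa [← mul_assoc, h1, one_mul] at this
  have hdp : d ∣ p := (ZMod.natCast_eq_zero_iff p d).mp hp0
  have hd_eq : d = p := by
    rcases (Nat.Prime.eq_one_or_self_of_dvd hp d hdp) with h | h
    · omega
    · exact h
  refine ⟨hd_eq, ?_⟩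
  have h41 : (4 : ZMod p) ^ p = 1 := by
    have hcastp : (((4:ℤ) ^ p - 1 : ℤ) : ZMod p) = 0 :=
      (ZMod.intCast_zmod_eq_zero_iff_dvd _ _).mpr (hd_eq ▸ hdvd)
    push_cast at hcastp
    linear_combination hcastp
  have h44 : (4 : ZMod p) ^ p = 4 := ZMod.pow_card _
  have h30 : (3 : ZMod p) = 0 := by
    have h4 : (4 : ZMod p) = 1 := by rw [← h44, h41]
    linear_combination h4
  have hp3 : p ∣ 3 := (ZMod.natCast_eq_zero_iff 3 p).mp (by exact_mod_cast h30)
  have hp3' : p = 3 := (Nat.prime_dvd_prime_iff_eq hp (by norm_num)).mp hp3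
  rw [hd_eq, hp3'] at hgcd
  norm_num at hgcd
end

section
/- Let p be a prime with p ≡ 1 (mod 4), and define the quaternary sequence g^1 of period 2p by g^1_t = 2·b_t if t is even and g^1_t = 2·c_t + 1 if t is odd, where b and c are the Legendre sequences of period p (b_0=0, b_t=0 for t a quadratic residue mod p, b_t=1 for t a non-residue; c_0=1, c_t=0 for t a quadratic residue, c_t=1 for a non-residue). Let G = ∑_{t=0}^{2p-1} g^1_t · 4^t. Then gcd(G, 4^p - 1) = 3. -/
/-- The Legendre sequence `b` of period `p`: `b 0 = 0`, `b t = 0` for `t` a quadratic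
residue mod `p`, `b t = 1` for `t` a quadratic non-residue. -/
def legb (p : ℕ) [Fact p.Prime] (t : ℕ) : ℤ :=
  if (t : ZMod p) = 0 then 0 else (1 - legendreSym p (t : ℤ)) / 2

/-- The Legendre sequence `c` of period `p`: `c 0 = 1`, `c t = b t` otherwise. -/
def legc (p : ℕ) [Fact p.Prime] (t : ℕ) : ℤ :=
  if (t : ZMod p) = 0 then 1 else (1 - legendreSym p (t : ℤ)) / 2

section Aux

variable (p : ℕ) [Fact p.Prime]

lemma aux_cast_eq (t : ℕ) : (((p + t : ℕ) : ℤ) : ZMod p) = ((t : ℤ) : ZMod p) := by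
  push_cast
  simp

lemma legendreSym_period (t : ℕ) : legendreSym p ((p + t : ℕ) : ℤ) = legendreSym p (t : ℤ) := by
  simp only [legendreSym, aux_cast_eq]

lemma natCast_period (t : ℕ) : ((p + t : ℕ) : ZMod p) = ((t : ℕ) : ZMod p) := by
  push_cast
  simp

lemma legb_period (t : ℕ) : legb p (p + t) = legb p t := by
  simp only [legb, natCast_period, legendreSym_period]

lemma legc_period (t : ℕ) : legc p (p + t) = legc p t := by
  simp only [legc, natCast_period, legendreSym_period]

lemma term_eq (hpodd : p % 2 = 1) (t : ℕ) :
    (if t % 2 = 0 then 2 * legb p t else 2 * legc p t + 1)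
      + (if (p + t) % 2 = 0 then 2 * legb p (p + t) else 2 * legc p (p + t) + 1)
    = 3 - 2 * legendreSym p (t : ℤ) := by
  rw [legb_period, legc_period]
  have hsum : 2 * legb p t + (2 * legc p t + 1) = 3 - 2 * legendreSym p (t : ℤ) := by
    by_cases ht : ((t : ℕ) : ZMod p) = 0
    · have hχ : legendreSym p (t : ℤ) = 0 := by
        rw [legendreSym.eq_zero_iff]
        push_cast
        exact ht
      simp [legb, legc, ht, hχ]
    · have hne : (((t : ℤ)) : ZMod p) ≠ 0 := by push_cast; exact ht
      have hb : legb p t = (1 - legendreSym p (t : ℤ)) / 2 := by simp [legb, ht]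
      have hc : legc p t = (1 - legendreSym p (t : ℤ)) / 2 := by simp [legc, ht]
      rcases legendreSym.eq_one_or_neg_one p hne with h | h <;>
        simp [hb, hc, h] <;> ring
  by_cases ht : t % 2 = 0
  · have hpt : (p + t) % 2 ≠ 0 := by omega
    rw [if_pos ht, if_neg hpt]
    exact hsum
  · have hpt : (p + t) % 2 = 0 := by omega
    rw [if_neg ht, if_pos hpt]
    linarith [hsum]

lemma sum_range_zmod {M : Type*} [AddCommMonoid M] (f : ZMod p → M) :
    ∑ t ∈ Finset.range p, f ((t : ℕ) : ZMod p) = ∑ a : ZMod p, f a := by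
  haveI : NeZero p := ⟨(Fact.out (p := p.Prime)).pos.ne'⟩
  refine Finset.sum_nbij' (fun t => ((t : ℕ) : ZMod p)) (fun a => a.val) ?_ ?_ ?_ ?_ ?_
  · intro a _; exact Finset.mem_univ _
  · intro a _; exact Finset.mem_range.mpr (ZMod.val_lt a)
  · intro a ha; exact ZMod.val_natCast_of_lt (Finset.mem_range.mp ha)
  · intro a _; exact ZMod.natCast_rightInverse a
  · intro a _; rfl

lemma sum_legendre_eq_zero (hp2 : p ≠ 2) :
    ∑ t ∈ Finset.range p, legendreSym p (t : ℤ) = 0 := by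
  have h : ∀ t : ℕ, legendreSym p (t : ℤ) = quadraticChar (ZMod p) ((t : ℕ) : ZMod p) := by
    intro t
    simp [legendreSym]
  simp_rw [h]
  rw [sum_range_zmod]
  exact quadraticChar_sum_zero (by rw [ZMod.ringChar_zmod_n]; exact hp2)

lemma gauss_step (q : ℕ) [hq : Fact q.Prime] (h1 : p % 4 = 1) (hq3 : q ≠ 3) (hq2 : q ≠ 2)
    (hqN : (q : ℤ) ∣ 4 ^ p - 1)
    (hqL : (q : ℤ) ∣ ∑ t ∈ Finset.range p, legendreSym p (t : ℤ) * 4 ^ t) : False := by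
  have hp : p.Prime := Fact.out
  have hp2 : p ≠ 2 := by rintro rfl; simp at h1
  have hp3 : p ≠ 3 := by rintro rfl; simp at h1
  haveI : NeZero p := ⟨hp.pos.ne'⟩
  have hζ : (4 : ZMod q) ^ p = 1 := by
    have h := (ZMod.intCast_zmod_eq_zero_iff_dvd _ q).mpr hqN
    push_cast at h
    linear_combination h
  have hζ1 : (4 : ZMod q) ≠ 1 := by
    intro h
    have h3 : ((3 : ℕ) : ZMod q) = 0 := by
      push_cast
      linear_combination h
    exact hq3 ((Nat.prime_dvd_prime_iff_eq hq.out (by norm_num)).mp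
      ((ZMod.natCast_eq_zero_iff 3 q).mp h3))
  have horder : orderOf (4 : ZMod q) = p :=
    (hp.eq_one_or_self_of_dvd _ (orderOf_dvd_of_pow_eq_one hζ)).resolve_left
      (by simpa [orderOf_eq_one_iff] using hζ1)
  have hprim : IsPrimitiveRoot (4 : ZMod q) p := horder ▸ IsPrimitiveRoot.orderOf (4 : ZMod q)
  have hψ := AddChar.zmodChar_primitive_of_primitive_root p hprim
  set ψ := AddChar.zmodChar p ((IsPrimitiveRoot.iff_def (4 : ZMod q) p).mp hprim).left with hψdef
  set χ' := (quadraticChar (ZMod p)).ringHomComp (Int.castRingHom (ZMod q)) with hχdef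
  have hχ1 : χ' ≠ 1 := by
    intro h
    obtain ⟨a, ha⟩ := quadraticChar_exists_neg_one (F := ZMod p)
      (by rw [ZMod.ringChar_zmod_n]; exact hp2)
    have ha0 : a ≠ 0 := by
      intro h0; rw [h0, quadraticChar_zero] at ha; norm_num at ha
    have hv : χ' a = ((-1 : ℤ) : ZMod q) := by
      rw [hχdef, MulChar.ringHomComp_apply, ha]; simp
    rw [h, MulChar.one_apply (isUnit_iff_ne_zero.mpr ha0)] at hv
    push_cast at hv
    have h2 : ((2 : ℕ) : ZMod q) = 0 := by push_cast; linear_combination hv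
    exact hq2 ((Nat.prime_dvd_prime_iff_eq hq.out (by norm_num)).mp
      ((ZMod.natCast_eq_zero_iff 2 q).mp h2))
  have hquad : χ'.IsQuadratic := (quadraticChar_isQuadratic (ZMod p)).comp _
  have hg := gaussSum_sq hχ1 hquad hψ
  have hm1 : χ' (-1) = 1 := by
    have h : quadraticChar (ZMod p) (-1) = 1 := by
      have h' := legendreSym.at_neg_one (p := p) hp2
      rw [ZMod.χ₄_nat_one_mod_four h1] at h'
      simpa [legendreSym] using h'
    rw [hχdef, MulChar.ringHomComp_apply, h]; simp
  have hgz : gaussSum χ' ψ = 0 := by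
    have hcast : ((∑ t ∈ Finset.range p, legendreSym p (t : ℤ) * 4 ^ t : ℤ) : ZMod q) = 0 :=
      (ZMod.intCast_zmod_eq_zero_iff_dvd _ q).mpr hqL
    rw [show ((0 : ZMod q)) = ((∑ t ∈ Finset.range p, legendreSym p (t : ℤ) * 4 ^ t : ℤ) : ZMod q)
      from hcast.symm]
    push_cast
    rw [gaussSum]
    refine (Finset.sum_nbij' (fun (t : ℕ) => ((t : ℕ) : ZMod p)) (fun a => a.val)
      ?_ ?_ ?_ ?_ ?_).symm
    · intro a _; exact Finset.mem_univ _
    · intro a _; exact Finset.mem_range.mpr (ZMod.val_lt a)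
    · intro a ha; exact ZMod.val_natCast_of_lt (Finset.mem_range.mp ha)
    · intro a _; exact ZMod.natCast_rightInverse a
    · intro t _
      have h1' : χ' ((t : ℕ) : ZMod p) = ((legendreSym p (t : ℤ) : ℤ) : ZMod q) := by
        rw [hχdef, MulChar.ringHomComp_apply]
        simp [legendreSym]
      have h2' : ψ ((t : ℕ) : ZMod p) = (4 : ZMod q) ^ t := by
        rw [hψdef, AddChar.zmodChar_apply']
      rw [h1', h2']
  rw [hgz, hm1, one_mul, ZMod.card] at hg
  have hqp : q = p := (Nat.prime_dvd_prime_iff_eq hq.out hp).mp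
    ((ZMod.natCast_eq_zero_iff p q).mp (by linear_combination -hg))
  subst hqp
  have h := (ZMod.intCast_zmod_eq_zero_iff_dvd _ q).mpr hqN
  push_cast at h
  rw [ZMod.pow_card] at h
  have h3 : ((3 : ℕ) : ZMod q) = 0 := by push_cast; linear_combination h
  exact hp3 ((Nat.prime_dvd_prime_iff_eq hq.out (by norm_num)).mp
    ((ZMod.natCast_eq_zero_iff 3 q).mp h3))

end Aux

theorem stmt6 (p : ℕ) [Fact p.Prime] (h1 : p % 4 = 1) :
    Int.gcd
      (∑ t ∈ Finset.range (2 * p),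
        (if t % 2 = 0 then 2 * legb p t else 2 * legc p t + 1) * 4 ^ t)
      ((4:ℤ) ^ p - 1) = 3 := by
  have hp : p.Prime := Fact.out
  have hp2 : p ≠ 2 := by rintro rfl; simp at h1
  have hp3 : p ≠ 3 := by rintro rfl; simp at h1
  have hpodd : p % 2 = 1 := Nat.Prime.eq_two_or_odd hp |>.resolve_left hp2
  set N : ℤ := (4 : ℤ) ^ p - 1 with hN
  set L : ℤ := ∑ t ∈ Finset.range p, legendreSym p (t : ℤ) * 4 ^ t with hL
  set G : ℤ := ∑ t ∈ Finset.range (2 * p),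
      (if t % 2 = 0 then 2 * legb p t else 2 * legc p t + 1) * 4 ^ t with hG
  -- key equation: G = N * c - 2 * L for some c
  obtain ⟨c, hkey⟩ : ∃ c : ℤ, G = N * c - 2 * L := by
    refine ⟨(∑ t ∈ Finset.range p,
      (if (p + t) % 2 = 0 then 2 * legb p (p + t) else 2 * legc p (p + t) + 1) * 4 ^ t) + 1, ?_⟩
    have hsplit : G = (∑ t ∈ Finset.range p,
          (if t % 2 = 0 then 2 * legb p t else 2 * legc p t + 1) * 4 ^ t)
        + ∑ t ∈ Finset.range p,
          (if (p + t) % 2 = 0 then 2 * legb p (p + t) else 2 * legc p (p + t) + 1) * 4 ^ (p + t) := by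
      rw [hG, two_mul, Finset.sum_range_add]
    have he1 : ∑ t ∈ Finset.range p,
          (if (p + t) % 2 = 0 then 2 * legb p (p + t) else 2 * legc p (p + t) + 1) * 4 ^ (p + t)
        = N * (∑ t ∈ Finset.range p,
            (if (p + t) % 2 = 0 then 2 * legb p (p + t) else 2 * legc p (p + t) + 1) * 4 ^ t)
          + ∑ t ∈ Finset.range p,
            (if (p + t) % 2 = 0 then 2 * legb p (p + t) else 2 * legc p (p + t) + 1) * 4 ^ t := by
      rw [Finset.mul_sum, ← Finset.sum_add_distrib]
      refine Finset.sum_congr rfl fun t _ => ?_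
      rw [pow_add, hN]
      ring
    have he2 : (∑ t ∈ Finset.range p,
          (if t % 2 = 0 then 2 * legb p t else 2 * legc p t + 1) * 4 ^ t)
        + ∑ t ∈ Finset.range p,
          (if (p + t) % 2 = 0 then 2 * legb p (p + t) else 2 * legc p (p + t) + 1) * 4 ^ t
        = ∑ t ∈ Finset.range p, (3 - 2 * legendreSym p (t : ℤ)) * 4 ^ t := by
      rw [← Finset.sum_add_distrib]
      refine Finset.sum_congr rfl fun t _ => ?_
      rw [← add_mul, term_eq p hpodd t]
    have he3 : ∑ t ∈ Finset.range p, (3 - 2 * legendreSym p (t : ℤ)) * 4 ^ t = N - 2 * L := by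
      have hg : (∑ i ∈ Finset.range p, (4 : ℤ) ^ i) * (4 - 1) = 4 ^ p - 1 := geom_sum_mul 4 p
      have : ∑ t ∈ Finset.range p, (3 - 2 * legendreSym p (t : ℤ)) * 4 ^ t
          = 3 * (∑ i ∈ Finset.range p, (4 : ℤ) ^ i) - 2 * L := by
        rw [hL, Finset.mul_sum, Finset.mul_sum, ← Finset.sum_sub_distrib]
        refine Finset.sum_congr rfl fun t _ => ?_
        ring
      rw [this, hN]
      linarith [hg]
    linarith [hsplit, he1, he2, he3]
  -- basic divisibilities
  have h3N : (3 : ℤ) ∣ N := by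
    have hg : (∑ i ∈ Finset.range p, (4 : ℤ) ^ i) * (4 - 1) = 4 ^ p - 1 := geom_sum_mul 4 p
    exact ⟨∑ i ∈ Finset.range p, (4 : ℤ) ^ i, by linarith [hg]⟩
  have h3L : (3 : ℤ) ∣ L := by
    have hdiff : (3 : ℤ) ∣ L - ∑ t ∈ Finset.range p, legendreSym p (t : ℤ) := by
      rw [hL, ← Finset.sum_sub_distrib]
      refine Finset.dvd_sum fun t _ => ?_
      have h4t : (3 : ℤ) ∣ 4 ^ t - 1 := by
        have hg : (∑ i ∈ Finset.range t, (4 : ℤ) ^ i) * (4 - 1) = 4 ^ t - 1 := geom_sum_mul 4 t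
        exact ⟨∑ i ∈ Finset.range t, (4 : ℤ) ^ i, by linarith [hg]⟩
      have : legendreSym p (t : ℤ) * 4 ^ t - legendreSym p (t : ℤ)
          = legendreSym p (t : ℤ) * (4 ^ t - 1) := by ring
      rw [this]
      exact Dvd.dvd.mul_left h4t _
    have := sum_legendre_eq_zero p hp2
    rw [this, sub_zero] at hdiff
    exact hdiff
  have h3G : (3 : ℤ) ∣ G := by
    rw [hkey]
    exact dvd_sub (Dvd.dvd.mul_right h3N c) (Dvd.dvd.mul_left h3L 2)
  have hNodd : ¬ (2 : ℤ) ∣ N := by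
    intro h
    have h0 : ((N : ℤ) : ZMod 2) = 0 := by
      rw [show ((2:ℤ)) = ((2:ℕ) : ℤ) by norm_num] at h
      exact (ZMod.intCast_zmod_eq_zero_iff_dvd _ 2).mpr h
    rw [hN] at h0
    push_cast at h0
    rw [show (4 : ZMod 2) = 0 by decide, zero_pow hp.pos.ne'] at h0
    simp at h0
  have h9N : ¬ (9 : ℤ) ∣ N := by
    intro h
    have h0 : ((N : ℤ) : ZMod 9) = 0 := by
      rw [show ((9:ℤ)) = ((9:ℕ) : ℤ) by norm_num] at h
      exact (ZMod.intCast_zmod_eq_zero_iff_dvd _ 9).mpr h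
    rw [hN] at h0
    push_cast at h0
    have hp3' : p % 3 ≠ 0 := by
      intro hm
      exact hp3 ((Nat.prime_dvd_prime_iff_eq (by norm_num) hp).mp
        (Nat.dvd_of_mod_eq_zero hm)).symm
    have hrw : (4 : ZMod 9) ^ p = (4 : ZMod 9) ^ (p % 3) := by
      conv_lhs => rw [← Nat.div_add_mod p 3]
      rw [pow_add, pow_mul, show (4 : ZMod 9) ^ 3 = 1 by decide, one_pow, one_mul]
    rw [hrw] at h0
    have hcases : p % 3 = 1 ∨ p % 3 = 2 := by omega
    rcases hcases with h | h
    · rw [h] at h0; rw [pow_one] at h0; revert h0; decide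
    · rw [h] at h0; revert h0; decide
  have hNne : N ≠ 0 := by
    intro h
    exact h9N (h ▸ dvd_zero 9)
  -- the gcd
  set d : ℕ := Int.gcd G N with hd
  have hdG : (d : ℤ) ∣ G := Int.gcd_dvd_left G N
  have hdN : (d : ℤ) ∣ N := Int.gcd_dvd_right G N
  have hd3 : 3 ∣ d := by
    have := Int.dvd_gcd h3G h3N
    exact_mod_cast this
  have hdne : d ≠ 0 := by
    intro h
    exact hNne ((Int.gcd_eq_zero_iff.mp (hd ▸ h)).2)
  obtain ⟨e, he⟩ := hd3
  have he1 : e = 1 := by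
    by_contra hne
    have hene : e ≠ 0 := by rintro rfl; exact hdne (by omega)
    obtain ⟨q, hq, hqe⟩ := Nat.exists_prime_and_dvd hne
    have hqd' : q ∣ d := by
      rw [he]; exact Dvd.dvd.mul_left hqe 3
    have hqG : (q : ℤ) ∣ G := dvd_trans (Int.natCast_dvd_natCast.mpr hqd') hdG
    have hqN : (q : ℤ) ∣ N := dvd_trans (Int.natCast_dvd_natCast.mpr hqd') hdN
    by_cases hq3 : q = 3
    · subst hq3
      have h9d : 9 ∣ d := by
        obtain ⟨f, hf⟩ := hqe
        rw [he, hf]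
        exact ⟨f, by ring⟩
      exact h9N (dvd_trans (by exact_mod_cast Int.natCast_dvd_natCast.mpr h9d) hdN)
    · have hq2 : q ≠ 2 := by
        rintro rfl
        exact hNodd (by exact_mod_cast hqN)
      have hq2L : (q : ℤ) ∣ 2 * L := by
        have : 2 * L = N * c - G := by linarith [hkey]
        rw [this]
        exact dvd_sub (Dvd.dvd.mul_right hqN c) hqG
      have hqL : (q : ℤ) ∣ L := by
        rcases (Nat.prime_iff_prime_int.mp hq).dvd_mul.mp hq2L with h | h
        · exfalso
          have : q ∣ 2 := by exact_mod_cast h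
          exact hq2 ((Nat.prime_dvd_prime_iff_eq hq (by norm_num)).mp this)
        · exact h
      haveI : Fact q.Prime := ⟨hq⟩
      exact gauss_step p q h1 hq3 hq2 hqN hqL
  rw [he, he1] at hd ⊢
end

section
/- Let p be a prime with p ≡ 1 (mod 4) and define g^1 and G = ∑_{t=0}^{2p-1} g^1_t·4^t as in the Kim et al. construction (g^1_t = 2·b_t for even t, g^1_t = 2·c_t + 1 for odd t, with b, c the Legendre sequences of period p). Then gcd(G, 4^p + 1) = 5 if 5 divides p + 2, and gcd(G, 4^p + 1) = 1 otherwise. -/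
lemma legendreSym_add_left (p : ℕ) [Fact p.Prime] (t : ℕ) :
    legendreSym p ((p + t : ℕ) : ℤ) = legendreSym p (t : ℤ) := by
  have h : (((p + t : ℕ) : ℤ)) % p = (t : ℤ) % p := by
    push_cast
    rw [add_comm]
    simpa using Int.add_mul_emod_self_left (a := (t : ℤ)) (b := (p : ℤ)) (c := 1)
  rw [legendreSym.mod, h, ← legendreSym.mod]

lemma legb_add (p : ℕ) [Fact p.Prime] (t : ℕ) : legb p (p + t) = legb p t := by
  unfold legb
  have h : ((p + t : ℕ) : ZMod p) = ((t : ℕ) : ZMod p) := by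
    push_cast
    simp
  rw [h, legendreSym_add_left]

lemma legc_add (p : ℕ) [Fact p.Prime] (t : ℕ) : legc p (p + t) = legc p t := by
  unfold legc
  have h : ((p + t : ℕ) : ZMod p) = ((t : ℕ) : ZMod p) := by
    push_cast
    simp
  rw [h, legendreSym_add_left]

lemma gcd_eq_of_dvd_sub {a b n : ℤ} (h : n ∣ b - a) : Int.gcd a n = Int.gcd b n := by
  have key : ∀ x y : ℤ, n ∣ y - x → Int.gcd x n ∣ Int.gcd y n := by
    intro x y hxy
    have h1 : (Int.gcd x n : ℤ) ∣ y := by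
      have := dvd_add (Int.gcd_dvd_left (a := x) (b := n))
        ((Int.gcd_dvd_right (a := x) (b := n)).trans hxy)
      simpa using this
    have h2 : (Int.gcd x n : ℤ) ∣ (Int.gcd y n : ℤ) :=
      Int.dvd_coe_gcd h1 (Int.gcd_dvd_right _ _)
    exact_mod_cast h2
  have h' : n ∣ a - b := by
    have := dvd_neg.mpr h
    rwa [neg_sub] at this
  exact Nat.dvd_antisymm (key a b h) (key b a h')

theorem stmt7 (p : ℕ) [Fact p.Prime] (h1 : p % 4 = 1) :
    Int.gcd
      (∑ t ∈ Finset.range (2 * p),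
        (if t % 2 = 0 then 2 * legb p t else 2 * legc p t + 1) * 4 ^ t)
      ((4:ℤ) ^ p + 1) = if 5 ∣ p + 2 then 5 else 1 := by
  have hp : p.Prime := Fact.out
  have hppos : 0 < p := hp.pos
  have hp2 : p % 2 = 1 := by omega
  set N : ℤ := (4:ℤ) ^ p + 1 with hN
  set M : ℤ := ∑ t ∈ Finset.range p, (-4 : ℤ) ^ t with hMdef
  set f : ℕ → ℤ := fun t => (if t % 2 = 0 then 2 * legb p t else 2 * legc p t + 1) * 4 ^ t
    with hf
  set h : ℕ → ℤ := fun t => if t % 2 = 0 then 2 * legc p t + 1 else 2 * legb p t with hh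
  set K : ℤ := ∑ t ∈ Finset.range p, h t * 4 ^ t with hK
  -- 5 * M = N
  have hgeom := geom_sum_mul (-4 : ℤ) p
  have hoddp : Odd p := Nat.odd_iff.mpr hp2
  have hnegpow : (-4 : ℤ) ^ p = -(4 ^ p) := Odd.neg_pow hoddp 4
  have h5M : 5 * M = N := by
    have : M * (-4 - 1) = -(4 ^ p) - 1 := by rw [← hnegpow, ← hgeom]
    rw [hN]; linarith
  -- M is odd
  have hModd : Odd M := by
    have h2 : (2 : ℤ) ∣ 4 ^ p := dvd_pow (by norm_num) hppos.ne'
    obtain ⟨k, hk⟩ := h2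
    rw [Int.odd_iff]
    omega
  -- M ≡ p (mod 5)
  have hM5 : (5 : ℤ) ∣ M - p := by
    have : M - p = ∑ t ∈ Finset.range p, ((-4 : ℤ) ^ t - 1) := by
      rw [Finset.sum_sub_distrib, Finset.sum_const, Finset.card_range, hMdef]
      push_cast; ring
    rw [this]
    refine Finset.dvd_sum fun t _ => ?_
    have : (-4 - 1 : ℤ) ∣ (-4 : ℤ) ^ t - 1 ^ t := sub_dvd_pow_sub_pow _ _ t
    simp only [one_pow] at this
    have h5 : (-5 : ℤ) ∣ (-4 : ℤ) ^ t - 1 := by norm_num at this ⊢; exact this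
    exact (neg_dvd).mp h5
  -- term computations
  have hterm2 : ∀ t, f (p + t) = h t * 4 ^ p * 4 ^ t := by
    intro t
    have hpar : (p + t) % 2 = (t + 1) % 2 := by omega
    rw [hf, hh]
    simp only [hpar, pow_add, legb_add, legc_add]
    rcases Nat.even_or_odd t with he | ho
    · have h0 : t % 2 = 0 := Nat.even_iff.mp he
      have h10 : (t + 1) % 2 = 1 := by omega
      simp [h0, h10]; ring
    · have h0 : t % 2 = 1 := Nat.odd_iff.mp ho
      have h10 : (t + 1) % 2 = 0 := by omega
      simp [h0, h10]; ring
  have hterm1 : ∀ t ∈ Finset.range p,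
      f t = (if t = 0 then (-3 : ℤ) else (-1) ^ (t + 1)) * 4 ^ t + h t * 4 ^ t := by
    intro t ht
    rw [Finset.mem_range] at ht
    rcases eq_or_ne t 0 with rfl | htne
    · simp [hf, hh, legb, legc]
    · have hnz : ((t : ℕ) : ZMod p) ≠ 0 := by
        rw [Ne, ZMod.natCast_eq_zero_iff]
        exact fun hd => htne (Nat.eq_zero_of_dvd_of_lt hd ht |> absurd <| by
          intro hcon; exact absurd (Nat.le_of_dvd (by omega) hd) (by omega))
      have hbc : legb p t = legc p t := by simp [legb, legc, hnz]
      rw [hf, hh]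
      simp only [if_neg htne]
      rcases Nat.even_or_odd t with he | ho
      · have h0 : t % 2 = 0 := Nat.even_iff.mp he
        have hm1 : (-1 : ℤ) ^ (t + 1) = -1 := Odd.neg_one_pow (Nat.odd_iff.mpr (by omega))
        simp only [h0, if_pos rfl, hbc, hm1]
        push_cast; ring
      · have h0 : t % 2 = 1 := Nat.odd_iff.mp ho
        have hm1 : (-1 : ℤ) ^ (t + 1) = 1 := Even.neg_one_pow (by
          exact Nat.even_iff.mpr (by omega))
        simp only [h0, hbc, hm1]
        norm_num; ring
  -- the d-sum
  have hdsum : ∑ t ∈ Finset.range p,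
      (if t = 0 then (-3 : ℤ) else (-1) ^ (t + 1)) * 4 ^ t = -2 - M := by
    have hterm : ∀ t, (if t = 0 then (-3 : ℤ) else (-1) ^ (t + 1)) * 4 ^ t
        = -(-4 : ℤ) ^ t + (if t = 0 then (-2 : ℤ) else 0) := by
      intro t
      rcases eq_or_ne t 0 with rfl | htne
      · norm_num
      · simp only [if_neg htne]
        rw [show ((-4 : ℤ)) ^ t = (-1) ^ t * 4 ^ t from by rw [neg_pow], pow_succ]
        ring
    have e1 : ∑ t ∈ Finset.range p, -(-4 : ℤ) ^ t = -M := by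
      rw [hMdef, ← Finset.sum_neg_distrib]
    have e2 : ∑ t ∈ Finset.range p, (if t = 0 then (-2 : ℤ) else 0) = -2 := by
      rw [Finset.sum_ite_eq' (Finset.range p) 0 (fun _ => (-2 : ℤ))]
      simp [Finset.mem_range, hppos]
    simp only [hterm]
    rw [Finset.sum_add_distrib, e1, e2]
    ring
  -- main congruence: G = -2 - M + N * K
  have hG : (∑ t ∈ Finset.range (2 * p),
      (if t % 2 = 0 then 2 * legb p t else 2 * legc p t + 1) * 4 ^ t)
      = (-2 - M) + N * K := by
    have hsplit : (∑ t ∈ Finset.range (2 * p), f t)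
        = (∑ t ∈ Finset.range p, f t) + ∑ t ∈ Finset.range p, f (p + t) := by
      rw [two_mul, Finset.sum_range_add]
    calc (∑ t ∈ Finset.range (2 * p), f t)
        = (∑ t ∈ Finset.range p, f t) + ∑ t ∈ Finset.range p, f (p + t) := hsplit
      _ = (∑ t ∈ Finset.range p,
            ((if t = 0 then (-3 : ℤ) else (-1) ^ (t + 1)) * 4 ^ t + h t * 4 ^ t))
          + ∑ t ∈ Finset.range p, h t * 4 ^ p * 4 ^ t := by
          rw [Finset.sum_congr rfl hterm1, Finset.sum_congr rfl (fun t _ => hterm2 t)]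
      _ = (-2 - M) + N * K := by
          rw [Finset.sum_add_distrib, hdsum]
          have : ∑ t ∈ Finset.range p, h t * 4 ^ p * 4 ^ t
              = 4 ^ p * ∑ t ∈ Finset.range p, h t * 4 ^ t := by
            rw [Finset.mul_sum]
            exact Finset.sum_congr rfl fun t _ => by ring
          rw [this, hK, hN]
          ring
  rw [hG]
  -- reduce gcd
  have hgcd1 : Int.gcd ((-2 - M) + N * K) N = Int.gcd (2 + M) N := by
    rw [gcd_eq_of_dvd_sub (a := (-2 - M) + N * K) (b := -(2 + M)) ⟨-K, by ring⟩,
      Int.gcd_def, Int.gcd_def, Int.natAbs_neg]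
  rw [hgcd1]
  -- coprimality with M
  have hcop2M : IsCoprime (2 : ℤ) M := by
    rw [Int.isCoprime_iff_gcd_eq_one, Int.gcd_def,
      show (2 : ℤ).natAbs = 2 from rfl]
    exact Nat.coprime_two_left.mpr (Int.natAbs_odd.mpr hModd)
  have hcopAM : IsCoprime (2 + M) M := by
    have := hcop2M.add_mul_left_left 1
    simpa using this
  -- gcd (2+M) N divides 5
  have hdvd5 : Int.gcd (2 + M) N ∣ 5 := by
    have hg1 : (Int.gcd (2 + M) N : ℤ) ∣ 2 + M := Int.gcd_dvd_left _ _
    have hg2 : (Int.gcd (2 + M) N : ℤ) ∣ 5 * M := by rw [h5M]; exact Int.gcd_dvd_right _ _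
    have hcop : IsCoprime ((Int.gcd (2 + M) N : ℤ)) M :=
      hcopAM.of_isCoprime_of_dvd_left hg1
    have h5' : (Int.gcd (2 + M) N : ℤ) ∣ 5 := hcop.dvd_of_dvd_mul_right hg2
    exact_mod_cast h5'
  by_cases hc : 5 ∣ p + 2
  · rw [if_pos hc]
    have h5A : (5 : ℤ) ∣ 2 + M := by
      have hpc : (5 : ℤ) ∣ ((p : ℤ) + 2) := by
        have : ((5 : ℕ) : ℤ) ∣ (((p + 2 : ℕ)) : ℤ) := Int.natCast_dvd_natCast.mpr hc
        push_cast at this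
        exact this
      have h2 := dvd_add hpc hM5
      have he : ((p : ℤ) + 2) + (M - p) = 2 + M := by ring
      rwa [he] at h2
    have h5g : (5 : ℕ) ∣ Int.gcd (2 + M) N := by
      have : (5 : ℤ) ∣ (Int.gcd (2 + M) N : ℤ) :=
        Int.dvd_coe_gcd h5A (by rw [← h5M]; exact ⟨M, rfl⟩)
      exact_mod_cast this
    exact Nat.dvd_antisymm hdvd5 h5g
  · rw [if_neg hc]
    rcases (by norm_num : Nat.Prime 5).eq_one_or_self_of_dvd _ hdvd5 with hg | hg
    · exact hg
    · exfalso
      apply hc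
      have h5A : (5 : ℤ) ∣ 2 + M := by
        have := Int.gcd_dvd_left (a := 2 + M) (b := N)
        rw [hg] at this
        exact_mod_cast this
      have h5p : (5 : ℤ) ∣ (p : ℤ) + 2 := by
        have h2 := dvd_sub h5A hM5
        have he : (2 + M) - (M - p) = (p : ℤ) + 2 := by ring
        rwa [he] at h2
      have : ((5 : ℕ) : ℤ) ∣ (((p + 2 : ℕ)) : ℤ) := by push_cast; exact h5p
      exact_mod_cast this
end

section
/- Let n ≥ 2 and let s be a binary sequence of period 2^n - 1 with ideal autocorrelation (all out-of-phase autocorrelations equal -1) and weight 2^{n-1}. Let T = ∑_{t=0}^{2^n-2} (-1)^{s_t}·4^t. Then for any prime r dividing both T and 4^{2^n-1} - 1, one has r divides 2^n - (4^{2^n-1}-1)/3; consequently gcd(T, 4^{2^n-1} - 1) = 1. -/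
open Finset

lemma key13 (N r : ℕ) [NeZero r] (hN : 0 < N) (s : ℕ → ℕ)
    (hper : ∀ t, s (t + N) = s t)
    (hauto : ∀ f, 0 < f → f < N →
      ∑ l ∈ Finset.range N, (-1 : ℤ) ^ (s (l + f) + s l) = -1)
    (hr : (r : ℤ) ∣ (4:ℤ) ^ N - 1)
    (hTr : (r : ℤ) ∣ ∑ t ∈ Finset.range N, (-1 : ℤ) ^ (s t) * 4 ^ t) :
    (r : ℤ) ∣ ((N : ℤ) + 1) - ∑ g ∈ Finset.range N, 4 ^ g := by
  have hmul : ∀ k m, s (m + N * k) = s m := by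
    intro k
    induction k with
    | zero => simp
    | succ k ih =>
      intro m
      have : m + N * (k + 1) = (m + N * k) + N := by ring
      rw [this, hper, ih]
  have hsm : ∀ t, s (t % N) = s t := by
    intro t
    conv_rhs => rw [← Nat.mod_add_div t N]
    rw [hmul]
  -- work in ZMod r
  set R := ZMod r
  have h4 : (4 : R) ^ N = 1 := by
    have h0 : ((( (4:ℤ)^N - 1) : ℤ) : R) = 0 :=
      (ZMod.intCast_zmod_eq_zero_iff_dvd _ r).mpr hr
    push_cast at h0
    linear_combination h0
  have h4e : ∀ m, (4 : R) ^ (m % N) = 4 ^ m := by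
    intro m
    conv_rhs => rw [← Nat.mod_add_div m N]
    rw [pow_add, pow_mul, h4, one_pow, mul_one]
  set e : ℕ → R := fun t => (-1) ^ (s t) with he
  have hT0 : (∑ t ∈ Finset.range N, e t * 4 ^ t) = 0 := by
    have h0 : (((∑ t ∈ Finset.range N, (-1 : ℤ) ^ (s t) * 4 ^ t) : ℤ) : R) = 0 :=
      (ZMod.intCast_zmod_eq_zero_iff_dvd _ r).mpr hTr
    push_cast +zetaDelta at h0
    exact h0
  have main : (∑ t ∈ Finset.range N, e t * 4 ^ t) *
      (∑ u ∈ Finset.range N, e u * 4 ^ (N - 1 - u)) =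
      ∑ f ∈ Finset.range N, (4:R) ^ (f + (N - 1)) *
        (∑ u ∈ Finset.range N, e (u + f) * e u) := by
    rw [Finset.sum_mul_sum, Finset.sum_comm]
    conv_rhs =>
      rw [show (∑ f ∈ Finset.range N, (4:R) ^ (f + (N - 1)) *
        (∑ u ∈ Finset.range N, e (u + f) * e u)) =
        ∑ u ∈ Finset.range N, ∑ f ∈ Finset.range N,
          (4:R) ^ (f + (N - 1)) * (e (u + f) * e u) by
          simp +zetaDelta only [Finset.mul_sum]; rw [Finset.sum_comm]]
    refine Finset.sum_congr rfl ?_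
    intro u hu
    have hu' : u < N := Finset.mem_range.mp hu
    have hes : ∀ m, e (m % N) = e m := by
      intro m; simp only [he]; rw [hsm]
    refine Finset.sum_bij' (fun t _ => (t + (N - u)) % N) (fun f _ => (u + f) % N)
      ?_ ?_ ?_ ?_ ?_
    · intro t ht; exact Finset.mem_range.mpr (Nat.mod_lt _ hN)
    · intro f hf; exact Finset.mem_range.mpr (Nat.mod_lt _ hN)
    · intro t ht
      have ht' : t < N := Finset.mem_range.mp ht
      simp only [Nat.add_mod_mod]
      rw [show u + (t + (N - u)) = t + N by omega, Nat.add_mod_right,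
        Nat.mod_eq_of_lt ht']
    · intro f hf
      have hf' : f < N := Finset.mem_range.mp hf
      simp only [Nat.mod_add_mod]
      rw [show u + f + (N - u) = f + N by omega, Nat.add_mod_right,
        Nat.mod_eq_of_lt hf']
    · intro t ht
      have ht' : t < N := Finset.mem_range.mp ht
      show e t * 4 ^ t * (e u * 4 ^ (N - 1 - u)) =
        4 ^ ((t + (N - u)) % N + (N - 1)) * (e (u + (t + (N - u)) % N) * e u)
      have h1 : (u + (t + (N - u)) % N) % N = t := by
        rw [Nat.add_mod_mod, show u + (t + (N - u)) = t + N by omega,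
          Nat.add_mod_right, Nat.mod_eq_of_lt ht']
      have he2 : e (u + (t + (N - u)) % N) = e t :=
        (hes (u + (t + (N - u)) % N)).symm.trans (by rw [h1])
      have h2 : (4 : R) ^ ((t + (N - u)) % N + (N - 1)) = 4 ^ (t + (N - 1 - u)) := by
        rw [pow_add, h4e, ← pow_add, show t + (N - u) + (N - 1) = t + (N - 1 - u) + N
          by omega, pow_add, h4, mul_one]
      rw [he2, h2, pow_add]
      ring
  have hc0 : (∑ u ∈ Finset.range N, e (u + 0) * e u) = (N : R) := by
    have : ∀ u, e (u + 0) * e u = 1 := by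
      intro u
      simp only [he, Nat.add_zero]
      rw [← pow_add, ← two_mul, pow_mul]
      norm_num
    rw [Finset.sum_congr rfl (fun u _ => this u)]
    simp
  have hcf : ∀ f, 0 < f → f < N → (∑ u ∈ Finset.range N, e (u + f) * e u) = -1 := by
    intro f h1 h2
    have := hauto f h1 h2
    have hcast : (((∑ l ∈ Finset.range N, (-1 : ℤ) ^ (s (l + f) + s l)) : ℤ) : R)
        = ∑ u ∈ Finset.range N, e (u + f) * e u := by
      push_cast +zetaDelta
      exact Finset.sum_congr rfl fun u _ => by rw [pow_add]
    rw [this] at hcast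
    push_cast at hcast
    exact hcast.symm
  have step : ∀ f ∈ Finset.range N, (4:R) ^ (f + (N - 1)) *
      (∑ u ∈ Finset.range N, e (u + f) * e u) =
      -((4:R) ^ (f + (N - 1))) + (if f = 0 then (4:R) ^ (f + (N - 1)) * ((N : R) + 1) else 0) := by
    intro f hf
    by_cases h : f = 0
    · subst h
      rw [hc0]
      simp
      ring
    · rw [hcf f (Nat.pos_of_ne_zero h) (Finset.mem_range.mp hf)]
      simp +zetaDelta [h]
  have h0 : (4:R) * ((∑ t ∈ Finset.range N, e t * 4 ^ t) *
      (∑ u ∈ Finset.range N, e u * 4 ^ (N - 1 - u))) = 0 := by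
    rw [hT0]; ring
  rw [main, Finset.sum_congr rfl step, Finset.sum_add_distrib,
    Finset.sum_ite_eq' (Finset.range N) 0 (fun f => (4:R) ^ (f + (N - 1)) * ((N : R) + 1)),
    if_pos (Finset.mem_range.mpr hN)] at h0
  have hgeo : (4:R) * (∑ f ∈ Finset.range N, -((4:R) ^ (f + (N - 1)))) =
      -∑ g ∈ Finset.range N, (4:R) ^ g := by
    rw [Finset.mul_sum]
    rw [show -∑ g ∈ Finset.range N, (4:R) ^ g = ∑ g ∈ Finset.range N, -((4:R) ^ g) by
      rw [Finset.sum_neg_distrib]]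
    refine Finset.sum_congr rfl ?_
    intro f hf
    rw [show (4:R) ^ f = 4 ^ (f + (N - 1)) * 4 by
      rw [← pow_succ, show f + (N - 1) + 1 = f + N by omega, pow_add, h4, mul_one]]
    ring
  have hlast : (4:R) * ((4:R) ^ (0 + (N - 1)) * ((N : R) + 1)) = (N : R) + 1 := by
    have h44 : (4:R) * (4:R) ^ (0 + (N - 1)) = 4 ^ N := by
      rw [← pow_succ']
      congr 1
      omega
    rw [← mul_assoc, h44, h4, one_mul]
  have hfin : ((N : R) + 1) - ∑ g ∈ Finset.range N, (4:R) ^ g = 0 := by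
    rw [mul_add] at h0
    rw [hgeo, hlast] at h0
    linear_combination h0
  have hcast : ((((N : ℤ) + 1) - ∑ g ∈ Finset.range N, (4:ℤ) ^ g : ℤ) : R) = 0 := by
    push_cast +zetaDelta
    exact hfin
  exact (ZMod.intCast_zmod_eq_zero_iff_dvd _ r).mp hcast

theorem stmt13 (n : ℕ) (hn : 2 ≤ n) (s : ℕ → ℕ)
    (hs01 : ∀ t, s t = 0 ∨ s t = 1)
    (hper : ∀ t, s (t + (2 ^ n - 1)) = s t)
    (hauto : ∀ f, 0 < f → f < 2 ^ n - 1 →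
      ∑ l ∈ Finset.range (2 ^ n - 1), (-1 : ℤ) ^ (s (l + f) + s l) = -1)
    (hw : ((Finset.range (2 ^ n - 1)).filter (fun t => s t = 1)).card = 2 ^ (n - 1))
    (T : ℤ) (hT : T = ∑ t ∈ Finset.range (2 ^ n - 1), (-1 : ℤ) ^ (s t) * 4 ^ t) :
    (∀ r : ℕ, r.Prime → (r : ℤ) ∣ T → (r : ℤ) ∣ (4:ℤ) ^ (2 ^ n - 1) - 1 →
      (r : ℤ) ∣ (2 ^ n : ℤ) - ((4:ℤ) ^ (2 ^ n - 1) - 1) / 3) ∧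
    Int.gcd T ((4:ℤ) ^ (2 ^ n - 1) - 1) = 1 := by

  set N := 2 ^ n - 1 with hNdef
  have h4n : 4 ≤ 2 ^ n := by
    calc (4:ℕ) = 2 ^ 2 := rfl
    _ ≤ 2 ^ n := Nat.pow_le_pow_right (by norm_num) hn
  have hN : 0 < N := by omega
  have h1n : 1 ≤ 2 ^ n := by omega
  have hNcast : (N : ℤ) = 2 ^ n - 1 := by
    rw [hNdef, Nat.cast_sub h1n]; push_cast; ring
  set S : ℤ := ∑ g ∈ Finset.range N, (4:ℤ) ^ g with hSdef
  have hS3 : 3 * S = 4 ^ N - 1 := by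
    have h := geom_sum_mul (4:ℤ) N
    linear_combination h
  have hdiv : ((4:ℤ) ^ N - 1) / 3 = S := by
    rw [← hS3, Int.mul_ediv_cancel_left _ (by norm_num)]
  have part1 : ∀ r : ℕ, r.Prime → (r : ℤ) ∣ T → (r : ℤ) ∣ (4:ℤ) ^ N - 1 →
      (r : ℤ) ∣ (2 ^ n : ℤ) - ((4:ℤ) ^ N - 1) / 3 := by
    intro r hrp hrT hrM
    haveI : NeZero r := ⟨hrp.ne_zero⟩
    have hk := key13 N r hN s hper hauto hrM (hT ▸ hrT)
    rw [hdiv]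
    have heq : ((N : ℤ) + 1) = 2 ^ n := by rw [hNcast]; ring
    rwa [heq, ← hSdef] at hk
  refine ⟨part1, ?_⟩
  by_contra hg
  obtain ⟨p, hp, hpd⟩ := Nat.exists_prime_and_dvd hg
  have hpT : (p : ℤ) ∣ T :=
    dvd_trans (Int.natCast_dvd_natCast.mpr hpd) (Int.gcd_dvd_left _ _)
  have hpM : (p : ℤ) ∣ (4:ℤ) ^ N - 1 :=
    dvd_trans (Int.natCast_dvd_natCast.mpr hpd) (Int.gcd_dvd_right _ _)
  have h1 := part1 p hp hpT hpM
  rw [hdiv] at h1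
  have hodd : p ≠ 2 := by
    rintro rfl
    have h2 : (2:ℤ) ∣ 4 ^ N := dvd_pow (by norm_num) (by omega)
    have h3 := dvd_sub h2 hpM
    simp only [sub_sub_cancel] at h3
    norm_num at h3
  have h32 : (p : ℤ) ∣ 3 * 2 ^ n := by
    have hd := dvd_add (Dvd.dvd.mul_left h1 3) hpM
    have heq : 3 * ((2:ℤ) ^ n - S) + ((4:ℤ) ^ N - 1) = 3 * 2 ^ n := by
      rw [← hS3]; ring
    rwa [heq] at hd
  have h32' : p ∣ 3 * 2 ^ n := by
    have : (p : ℤ) ∣ ((3 * 2 ^ n : ℕ) : ℤ) := by push_cast; exact h32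
    exact_mod_cast this
  rcases (Nat.Prime.dvd_mul hp).mp h32' with h3 | h2n
  · have hp3 : p = 3 := (Nat.prime_dvd_prime_iff_eq hp (by norm_num)).mp h3
    subst hp3
    have hSN : (3:ℤ) ∣ S - N := by
      have h := Finset.dvd_sum (fun g (_ : g ∈ Finset.range N) =>
        (by simpa using sub_dvd_pow_sub_pow (4:ℤ) 1 g : (3:ℤ) ∣ 4 ^ g - 1))
      have heq : ∑ g ∈ Finset.range N, ((4:ℤ) ^ g - 1) = S - N := by
        rw [Finset.sum_sub_distrib, Finset.sum_const, Finset.card_range]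
        simp [hSdef]
      rwa [heq] at h
    have hcon : (3:ℤ) ∣ 1 := by
      have hd := dvd_add h1 hSN
      have heq : ((2:ℤ) ^ n - S) + (S - (N : ℤ)) = 1 := by rw [hNcast]; ring
      rwa [heq] at hd
    norm_num at hcon
  · exact hodd ((Nat.prime_dvd_prime_iff_eq hp (by norm_num)).mp
      (hp.dvd_of_dvd_pow h2n))
end

section
/- Let n ≥ 2, let s be a binary sequence of period 2^n - 1 with ideal autocorrelation, with characteristic set D_0 = {t : s_t = 1}, and define the quaternary sequence g^3 of period 2(2^n - 1) by: g^3_t = 0 if (t mod 2, t mod 2^n-1) ∈ {0}×D̄_0; 1 if ∈ {1}×D̄_0; 2 if ∈ {0}×D_0; 3 if ∈ {1}×D_0 (using CRT Z_{2(2^n-1)} ≅ Z_2 × Z_{2^n-1}). Let G = ∑_{t=0}^{2^{n+1}-3} g^3_t·4^t. Then G = 4·((4^{2^n-1}+1)/5)·((4^{2^n-1}-1)/3) + 2·(1 + 4^{2^n-1})·∑_{t=0}^{2^n-2} s_t·4^t. -/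
lemma aux_parity_sum (m : ℕ) :
    ∑ t ∈ Finset.range (2 * m), ((t % 2 : ℕ) : ℤ) * 4 ^ t =
      4 * ∑ i ∈ Finset.range m, (16 : ℤ) ^ i := by
  induction m with
  | zero => simp
  | succ m ih =>
    have h2 : 2 * (m + 1) = 2 * m + 1 + 1 := by ring
    rw [h2, Finset.sum_range_succ, Finset.sum_range_succ, ih, Finset.sum_range_succ]
    have hm0 : (2 * m) % 2 = 0 := Nat.mul_mod_right 2 m
    have hm1 : (2 * m + 1) % 2 = 1 := by omega
    have hp : (4 : ℤ) ^ (2 * m + 1) = 4 * 16 ^ m := by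
      rw [pow_succ, pow_mul]; norm_num; ring
    rw [hm0, hm1, hp]
    push_cast
    ring

theorem stmt14 (n : ℕ) (hn : 2 ≤ n) (s : ℕ → ℕ)
    (hs01 : ∀ t, s t = 0 ∨ s t = 1)
    (G : ℤ)
    (hG : G = ∑ t ∈ Finset.range (2 * (2 ^ n - 1)),
      ((t % 2 + 2 * s (t % (2 ^ n - 1)) : ℕ) : ℤ) * 4 ^ t) :
    G = 4 * (((4:ℤ) ^ (2 ^ n - 1) + 1) / 5) * (((4:ℤ) ^ (2 ^ n - 1) - 1) / 3) +
      2 * (1 + (4:ℤ) ^ (2 ^ n - 1)) *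
        ∑ t ∈ Finset.range (2 ^ n - 1), (s t : ℤ) * 4 ^ t := by
  set N := 2 ^ n - 1 with hNdef
  -- N is odd
  have hodd : Odd N := by
    apply Nat.Even.sub_odd (Nat.one_le_two_pow) _ odd_one
    exact (Nat.even_pow).mpr ⟨even_two, by omega⟩
  obtain ⟨k, hk⟩ := hodd
  -- geometric sum facts
  have hgs : ∀ m : ℕ, (15 : ℤ) * ∑ i ∈ Finset.range m, (16:ℤ) ^ i = 16 ^ m - 1 := by
    intro m
    have h := geom_sum_mul (16 : ℤ) m
    linarith
  set c : ℤ := ∑ i ∈ Finset.range k, (16:ℤ) ^ i with hc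
  have h16k : (16 : ℤ) ^ k = 15 * c + 1 := by have := hgs k; linarith
  have h4N : (4 : ℤ) ^ N = 4 * 16 ^ k := by
    rw [hk, pow_succ, pow_mul]; norm_num; ring
  -- compute the divisions
  have hdiv5 : ((4:ℤ) ^ N + 1) / 5 = 12 * c + 1 := by
    have h : (4:ℤ) ^ N + 1 = 5 * (12 * c + 1) := by rw [h4N, h16k]; ring
    rw [h, Int.mul_ediv_cancel_left _ (by norm_num)]
  have hdiv3 : ((4:ℤ) ^ N - 1) / 3 = 20 * c + 1 := by
    have h : (4:ℤ) ^ N - 1 = 3 * (20 * c + 1) := by rw [h4N, h16k]; ring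
    rw [h, Int.mul_ediv_cancel_left _ (by norm_num)]
  -- split the sum
  have hsplit : G = (∑ t ∈ Finset.range (2 * N), ((t % 2 : ℕ) : ℤ) * 4 ^ t)
      + 2 * ∑ t ∈ Finset.range (2 * N), ((s (t % N) : ℕ) : ℤ) * 4 ^ t := by
    rw [hG, Finset.mul_sum, ← Finset.sum_add_distrib]
    apply Finset.sum_congr rfl
    intro t _
    push_cast
    ring
  -- the s-part
  have hs : ∑ t ∈ Finset.range (2 * N), ((s (t % N) : ℕ) : ℤ) * 4 ^ t
      = (1 + (4:ℤ) ^ N) * ∑ t ∈ Finset.range N, (s t : ℤ) * 4 ^ t := by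
    rw [two_mul, Finset.sum_range_add]
    have h1 : ∑ t ∈ Finset.range N, ((s (t % N) : ℕ) : ℤ) * 4 ^ t
        = ∑ t ∈ Finset.range N, (s t : ℤ) * 4 ^ t := by
      apply Finset.sum_congr rfl
      intro t ht
      rw [Nat.mod_eq_of_lt (Finset.mem_range.mp ht)]
    have h2 : ∑ t ∈ Finset.range N, ((s ((N + t) % N) : ℕ) : ℤ) * 4 ^ (N + t)
        = (4:ℤ) ^ N * ∑ t ∈ Finset.range N, (s t : ℤ) * 4 ^ t := by
      rw [Finset.mul_sum]
      apply Finset.sum_congr rfl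
      intro t ht
      rw [Nat.add_mod_left, Nat.mod_eq_of_lt (Finset.mem_range.mp ht), pow_add]
      ring
    rw [h1, h2]
    ring
  -- the parity part
  have hT : ∑ i ∈ Finset.range N, (16:ℤ) ^ i = 240 * c ^ 2 + 32 * c + 1 := by
    have h := hgs N
    have h16N : (16:ℤ) ^ N = (4 ^ N) ^ 2 := by rw [← pow_mul, mul_comm, pow_mul]; norm_num
    rw [h16N, h4N, h16k] at h
    nlinarith [h]
  rw [hsplit, aux_parity_sum, hs, hdiv5, hdiv3, hT]
  ring
end

section
/- With g^3 and G as in the Jang et al. construction (quaternary sequence of period 2(2^n-1) built via CRT and Gray map from a binary ideal-autocorrelation sequence s of period 2^n-1), gcd(G, 4^{2^n-1} + 1) = (4^{2^n-1} + 1)/5. -/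
theorem stmt15 (n : ℕ) (hn : 2 ≤ n) (s : ℕ → ℕ)
    (hs01 : ∀ t, s t = 0 ∨ s t = 1)
    (hper : ∀ t, s (t + (2 ^ n - 1)) = s t)
    (hauto : ∀ f, 0 < f → f < 2 ^ n - 1 →
      ∑ l ∈ Finset.range (2 ^ n - 1), (-1 : ℤ) ^ (s (l + f) + s l) = -1)
    (G : ℤ)
    (hG : G = ∑ t ∈ Finset.range (2 * (2 ^ n - 1)),
      ((t % 2 + 2 * s (t % (2 ^ n - 1)) : ℕ) : ℤ) * 4 ^ t) :
    Int.gcd G ((4:ℤ) ^ (2 ^ n - 1) + 1) = ((4:ℤ) ^ (2 ^ n - 1) + 1) / 5 := by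
  set N := 2 ^ n - 1 with hNdef
  have h2n : (2:ℕ) ∣ 2 ^ n := dvd_pow_self 2 (by omega)
  have hN1 : 1 ≤ 2 ^ n := Nat.one_le_two_pow
  have hNodd : N % 2 = 1 := by omega
  have hNpos : 0 < N := by
    have h4 : (4:ℕ) ≤ 2 ^ n := by
      calc (4:ℕ) = 2 ^ 2 := rfl
      _ ≤ 2 ^ n := Nat.pow_le_pow_right (by norm_num) hn
    omega
  set M : ℤ := 4 ^ N + 1 with hMdef
  set Q : ℤ := ∑ t ∈ Finset.range N, (-4 : ℤ) ^ t with hQdef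
  have hOddN : Odd N := Nat.odd_iff.mpr hNodd
  have h5Q : 5 * Q = M := by
    have hg := geom_sum_mul (-4 : ℤ) N
    have hneg : (-4 : ℤ) ^ N = -(4 ^ N) := hOddN.neg_pow 4
    rw [hneg] at hg
    have : Q * (-5) = -(4 ^ N) - 1 := by linarith [hg]
    linarith
  have hMpos : 0 < M := by positivity
  have hQpos : 0 < Q := by linarith
  -- split the sum
  set S' : ℤ := ∑ t ∈ Finset.range N, (((1 + t) % 2 + 2 * s t : ℕ) : ℤ) * 4 ^ t with hS'
  have hGsplit : G = M * S' - Q := by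
    rw [hG]
    have h2N : 2 * N = N + N := by ring
    rw [h2N, Finset.sum_range_add]
    have hB : ∀ t ∈ Finset.range N,
        (((N + t) % 2 + 2 * s ((N + t) % N) : ℕ) : ℤ) * 4 ^ (N + t)
          = ((((1 + t) % 2 + 2 * s t : ℕ)) : ℤ) * 4 ^ t * 4 ^ N := by
      intro t ht
      rw [Finset.mem_range] at ht
      have h1 : (N + t) % N = t := by
        rw [Nat.add_mod_left, Nat.mod_eq_of_lt ht]
      have h2 : (N + t) % 2 = (1 + t) % 2 := by omega
      rw [h1, h2, pow_add]
      ring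
    rw [Finset.sum_congr rfl hB, ← Finset.sum_mul]
    have hA : ∑ t ∈ Finset.range N, ((t % 2 + 2 * s (t % N) : ℕ) : ℤ) * 4 ^ t
        = S' - Q := by
      rw [hS', hQdef, ← Finset.sum_sub_distrib]
      apply Finset.sum_congr rfl
      intro t ht
      rw [Finset.mem_range] at ht
      have h1 : t % N = t := Nat.mod_eq_of_lt ht
      rw [h1]
      rcases Nat.even_or_odd t with he | ho
      · have h2 : t % 2 = 0 := Nat.even_iff.mp he
        have h3 : (1 + t) % 2 = 1 := by omega
        rw [h2, h3, he.neg_pow]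
        push_cast
        ring
      · have h2 : t % 2 = 1 := Nat.odd_iff.mp ho
        have h3 : (1 + t) % 2 = 0 := by omega
        rw [h2, h3, ho.neg_pow]
        push_cast
        ring
    rw [hA, ← hS']
    ring_nf
    rw [hMdef]
    ring
  -- finish
  have hRHS : M / 5 = Q := by
    rw [← h5Q, Int.mul_ediv_cancel_left _ (by norm_num)]
  rw [hRHS]
  have hgcd : (Int.gcd G M : ℤ) = Q := by
    apply Int.dvd_antisymm (by positivity) (le_of_lt hQpos)
    · have hdG : (Int.gcd G M : ℤ) ∣ G := Int.gcd_dvd_left G M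
      have hdM : (Int.gcd G M : ℤ) ∣ M := Int.gcd_dvd_right G M
      have hkey : M * S' - G = Q := by rw [hGsplit]; ring
      have h := (hdM.mul_right S').sub hdG
      rwa [hkey] at h
    · apply Int.dvd_coe_gcd
      · rw [hGsplit, ← h5Q]
        exact Dvd.dvd.sub (Dvd.dvd.mul_right (Dvd.dvd.mul_left dvd_rfl 5) S') dvd_rfl
      · rw [← h5Q]; exact Dvd.dvd.mul_left dvd_rfl 5
  exact_mod_cast hgcd
end

section
/- Let p be an odd prime and let d be a prime divisor of 4^p - 1 with d ≠ 3 such that d divides 1 + ∑_{t=1}^{p-1} (t/p)·4^t, where p ≡ 3 (mod 4). Then d divides p + 1, and no such d exists (since 4^p ≡ 1 mod d and 4^{d-1} ≡ 1 mod d force p | d - 1, contradicting d | p+1 with d prime > 2). -/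
theorem stmt18 (p : ℕ) [Fact p.Prime] (h3 : p % 4 = 3) (d : ℕ) (hd : d.Prime)
    (hd3 : d ≠ 3) (hdvd : (d : ℤ) ∣ (4:ℤ) ^ p - 1)
    (hdiv : (d : ℤ) ∣ 1 + ∑ t ∈ Finset.Icc 1 (p - 1), legendreSym p (t : ℤ) * 4 ^ t) :
    (d : ℤ) ∣ (p : ℤ) + 1 ∧ False := by
  haveI : Fact d.Prime := ⟨hd⟩
  have hp : p.Prime := Fact.out
  have hp3 : 3 ≤ p := by omega
  have hp2 : p ≠ 2 := by omega
  -- d ≠ 2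
  have hd2 : d ≠ 2 := by
    rintro rfl
    have h1 : (2:ℤ) ∣ (4:ℤ)^p := dvd_pow (by norm_num) hp.ne_zero
    have : (2:ℤ) ∣ 1 := (dvd_sub_right h1).mp (by exact_mod_cast hdvd)
    norm_num at this
  -- 4^p = 1 in ZMod d
  have h4p : (4 : ZMod d) ^ p = 1 := by
    have : ((4:ℤ)^p - 1 : ℤ) = 0 → True := fun _ => trivial
    have h := (ZMod.intCast_zmod_eq_zero_iff_dvd _ d).mpr hdvd
    push_cast at h ⊢
    linear_combination h
  have h41 : (4 : ZMod d) ≠ 1 := by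
    intro h
    have h30 : (3 : ZMod d) = 0 := by linear_combination h
    have : d ∣ 3 := by exact_mod_cast (ZMod.natCast_eq_zero_iff 3 d).mp (by exact_mod_cast h30)
    exact hd3 ((Nat.prime_dvd_prime_iff_eq hd (by norm_num)).mp this)
  have hord : orderOf (4 : ZMod d) = p := orderOf_eq_prime h4p h41
  have hprim : IsPrimitiveRoot (4 : ZMod d) p := hord ▸ IsPrimitiveRoot.orderOf (4 : ZMod d)
  -- additive character
  let ψ : AddChar (ZMod p) (ZMod d) := AddChar.zmodChar p hprim.pow_eq_one
  have hψ : ψ.IsPrimitive := by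
    have := AddChar.zmodChar_primitive_of_primitive_root p hprim
    exact this
  -- multiplicative character
  let χ : MulChar (ZMod p) (ZMod d) :=
    (quadraticChar (ZMod p)).ringHomComp (Int.castRingHom (ZMod d))
  have hdchar : ringChar (ZMod d) ≠ 2 := by
    rw [ZMod.ringChar_zmod_n]; exact hd2
  have hneg1 : ((-1 : ℤ) : ZMod d) ≠ 1 := by
    intro h
    exact (Ring.neg_one_ne_one_of_char_ne_two hdchar) (by exact_mod_cast h)
  have hχ1 : χ ≠ 1 := by
    obtain ⟨a, ha⟩ := quadraticChar_exists_neg_one' (by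
      rw [ZMod.ringChar_zmod_n]; exact hp2 : ringChar (ZMod p) ≠ 2)
    rw [MulChar.ne_one_iff]
    refine ⟨a, ?_⟩
    show ((quadraticChar (ZMod p) a : ℤ) : ZMod d) ≠ 1
    rw [ha]
    exact hneg1
  have hχ2 : χ.IsQuadratic := (quadraticChar_isQuadratic (ZMod p)).comp _
  -- identify the sum with the Gauss sum
  have hS : (((∑ t ∈ Finset.Icc 1 (p - 1), legendreSym p (t : ℤ) * 4 ^ t : ℤ)) : ZMod d)
      = gaussSum χ ψ := by
    rw [gaussSum]
    have key : ∀ a : ZMod p, χ a * ψ a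
        = ((legendreSym p (a.val : ℤ) * 4 ^ a.val : ℤ) : ZMod d) := by
      intro a
      have h1 : χ a = ((legendreSym p (a.val : ℤ) : ℤ) : ZMod d) := by
        show ((quadraticChar (ZMod p) a : ℤ) : ZMod d) = _
        rw [legendreSym]
        push_cast
        rw [ZMod.natCast_val, ZMod.cast_id]
      have h2 : ψ a = ((4:ℤ) ^ a.val : ℤ) := by
        show (4 : ZMod d) ^ a.val = _
        push_cast; ring
      rw [h1, h2]; push_cast; ring
    simp_rw [key]
    push_cast
    have step1 : ∑ t ∈ Finset.Icc 1 (p - 1), (legendreSym p (t:ℤ) : ZMod d) * 4 ^ t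
        = ∑ t ∈ Finset.range p, (legendreSym p (t:ℤ) : ZMod d) * 4 ^ t := by
      refine Finset.sum_subset ?_ ?_
      · intro t ht
        simp only [Finset.mem_Icc] at ht
        simp only [Finset.mem_range]
        omega
      · intro t ht ht'
        simp only [Finset.mem_Icc, Finset.mem_range] at ht ht'
        have ht0 : t = 0 := by omega
        subst ht0
        simp [legendreSym.at_zero]
    rw [step1]
    exact Finset.sum_nbij' (fun t => (t : ZMod p)) (fun a => a.val)
      (fun a _ => Finset.mem_univ _)
      (fun a _ => Finset.mem_range.mpr (ZMod.val_lt a))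
      (fun t ht => ZMod.val_cast_of_lt (Finset.mem_range.mp ht))
      (fun a _ => ZMod.natCast_rightInverse a)
      (fun t ht => by
        rw [ZMod.val_cast_of_lt (Finset.mem_range.mp ht)])
  -- conclude via Gauss sum square
  have hSval : gaussSum χ ψ = -1 := by
    rw [← hS]
    have h := (ZMod.intCast_zmod_eq_zero_iff_dvd _ d).mpr hdiv
    push_cast at h ⊢
    linear_combination h
  have hsq := gaussSum_sq hχ1 hχ2 hψ
  rw [hSval] at hsq
  have hcard : (Fintype.card (ZMod p) : ZMod d) = (p : ZMod d) := by rw [ZMod.card]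
  have hχneg : χ (-1) = -1 := by
    show ((quadraticChar (ZMod p) (-1) : ℤ) : ZMod d) = -1
    have : quadraticChar (ZMod p) (-1) = legendreSym p (-1) := by
      rw [legendreSym]; norm_num
    rw [this, legendreSym.at_neg_one hp2, ZMod.χ₄_nat_three_mod_four h3]
    norm_num
  rw [hχneg, hcard] at hsq
  -- hsq : (-1)^2 = -1 * p in ZMod d
  have hp1 : ((p : ℕ) + 1 : ZMod d) = 0 := by linear_combination hsq
  have hdp1 : d ∣ p + 1 := (ZMod.natCast_eq_zero_iff _ d).mp (by exact_mod_cast hp1)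
  refine ⟨by exact_mod_cast hdp1, ?_⟩
  -- order argument
  have h40 : (4 : ZMod d) ≠ 0 := by
    intro h
    have hdvd4 : d ∣ 4 := by exact_mod_cast (ZMod.natCast_eq_zero_iff 4 d).mp (by exact_mod_cast h)
    have hd4 : d ∣ 2 ^ 2 := by norm_num; exact hdvd4
    exact hd2 ((Nat.prime_dvd_prime_iff_eq hd Nat.prime_two).mp (hd.dvd_of_dvd_pow hd4))
  have hfermat : (4 : ZMod d) ^ (d - 1) = 1 := ZMod.pow_card_sub_one_eq_one h40
  have hpd : p ∣ d - 1 := hord ▸ orderOf_dvd_of_pow_eq_one hfermat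
  have hd1 : d ≥ 2 := hd.two_le
  have hle : d ≤ p + 1 := Nat.le_of_dvd (by omega) hdp1
  have hge : p ≤ d - 1 := Nat.le_of_dvd (by omega) hpd
  have hdeq : d = p + 1 := by omega
  have hpodd : p % 2 = 1 := by omega
  have : Even d := by rw [hdeq]; exact ⟨(p+1)/2, by omega⟩
  have := (Nat.Prime.even_iff hd).mp this
  omega
end
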